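/- Let d_1 ≥ d_2 ≥ ... ≥ d_p ≥ 0 be reals with Σ_i d_i ≥ b, and suppose d_1 ≤ b/2. Partition the indices alternately (odd indices into J₁, even into J₂). Then Σ_{i∈J₁} d_i ≥ b/4 and Σ_{i∈J₂} d_i ≥ b/4. -/

import Mathlib

private lemma split_even_odd' (f : ℕ → ℝ) (N : ℕ) :
    ∑ n ∈ Finset.range (2 * N), f n
      = (∑ k ∈ Finset.range N, f (2 * k)) + ∑ k ∈ Finset.range N, f (2 * k + 1) := by
  induction N with
  | zero => simp
  | succ N ih =>
    rw [Nat.mul_succ, show 2 * N + 2 = (2 * N + 1) + 1 from rfl,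
      Finset.sum_range_succ, Finset.sum_range_succ, Finset.sum_range_succ,
      Finset.sum_range_succ, ih]
    ring

private lemma even_filter_sum' (f : ℕ → ℝ) (N : ℕ) :
    ∑ n ∈ Finset.range (2 * N), (if Even n then f n else 0)
      = ∑ k ∈ Finset.range N, f (2 * k) := by
  induction N with
  | zero => simp
  | succ N ih =>
    rw [Nat.mul_succ, show 2 * N + 2 = (2 * N + 1) + 1 from rfl,
      Finset.sum_range_succ, Finset.sum_range_succ, Finset.sum_range_succ, ih]
    simp [Nat.even_add_one]

private lemma odd_filter_sum' (f : ℕ → ℝ) (N : ℕ) :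
    ∑ n ∈ Finset.range (2 * N), (if Odd n then f n else 0)
      = ∑ k ∈ Finset.range N, f (2 * k + 1) := by
  induction N with
  | zero => simp
  | succ N ih =>
    rw [Nat.mul_succ, show 2 * N + 2 = (2 * N + 1) + 1 from rfl,
      Finset.sum_range_succ, Finset.sum_range_succ, Finset.sum_range_succ, ih]
    simp [Nat.even_add_one, Nat.odd_iff, Nat.even_iff]

/-- Greedy balanced-partition lemma: if `d_0 ≥ d_1 ≥ ⋯ ≥ d_{p-1} ≥ 0` sum to at
least `b` and every element is at most `b/2`, then alternately partitioning the
(sorted) indices into two sets yields at least `b/4` in each set. -/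
theorem stmt_11 (p : ℕ) (b : ℝ) (d : Fin p → ℝ)
    (hnn : ∀ i, 0 ≤ d i)
    (hsorted : ∀ i j : Fin p, i ≤ j → d j ≤ d i)
    (hsum : b ≤ ∑ i, d i)
    (hsmall : ∀ i, d i ≤ b / 2) :
    b / 4 ≤ ∑ i ∈ Finset.univ.filter (fun i : Fin p => Even i.val), d i ∧
    b / 4 ≤ ∑ i ∈ Finset.univ.filter (fun i : Fin p => Odd i.val), d i := by
  classical
  by_cases hb : b ≤ 0
  · constructor <;>
      exact le_trans (by linarith) (Finset.sum_nonneg fun i _ => hnn i)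
  push_neg at hb
  have hp : 0 < p := by
    rcases Nat.eq_zero_or_pos p with h | h
    · subst h; simp at hsum; linarith
    · exact h
  set e : ℕ → ℝ := fun n => if h : n < p then d ⟨n, h⟩ else 0 with he
  have he_nn : ∀ n, 0 ≤ e n := fun n => by
    by_cases h : n < p <;> simp [he, h, hnn]
  have he_zero : ∀ n, p ≤ n → e n = 0 := fun n h => by
    simp [he, Nat.not_lt.mpr h]
  have he_anti : ∀ m n : ℕ, m ≤ n → e n ≤ e m := by
    intro m n hmn
    by_cases hn : n < p
    · have hm : m < p := lt_of_le_of_lt hmn hn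
      simpa [he, hn, hm] using hsorted ⟨m, hm⟩ ⟨n, hn⟩ hmn
    · rw [he_zero n (Nat.not_lt.mp hn)]; exact he_nn m
  have hext : ∀ (g : ℕ → ℝ), (∀ n, g n = 0 ∨ g n = e n) →
      ∑ n ∈ Finset.range p, g n = ∑ n ∈ Finset.range (2 * p), g n := by
    intro g hg
    apply Finset.sum_subset (Finset.range_subset_range.mpr (by omega))
    intro n _ hnp
    simp only [Finset.mem_range] at hnp
    rcases hg n with h | h
    · exact h
    · rw [h]; exact he_zero n (by omega)
  have hEe : ∑ i ∈ Finset.univ.filter (fun i : Fin p => Even i.val), d i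
      = ∑ k ∈ Finset.range p, e (2 * k) := by
    calc ∑ i ∈ Finset.univ.filter (fun i : Fin p => Even i.val), d i
        = ∑ i : Fin p, (if Even i.val then e i.val else 0) := by
          rw [Finset.sum_filter]
          exact Finset.sum_congr rfl fun i _ => by simp [he, i.isLt]
      _ = ∑ n ∈ Finset.range p, (if Even n then e n else 0) :=
          Fin.sum_univ_eq_sum_range (fun n => if Even n then e n else 0) p
      _ = ∑ n ∈ Finset.range (2 * p), (if Even n then e n else 0) :=
          hext _ (fun n => by split <;> simp)
      _ = ∑ k ∈ Finset.range p, e (2 * k) := even_filter_sum' e p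
  have hOe : ∑ i ∈ Finset.univ.filter (fun i : Fin p => Odd i.val), d i
      = ∑ k ∈ Finset.range p, e (2 * k + 1) := by
    calc ∑ i ∈ Finset.univ.filter (fun i : Fin p => Odd i.val), d i
        = ∑ i : Fin p, (if Odd i.val then e i.val else 0) := by
          rw [Finset.sum_filter]
          exact Finset.sum_congr rfl fun i _ => by simp [he, i.isLt]
      _ = ∑ n ∈ Finset.range p, (if Odd n then e n else 0) :=
          Fin.sum_univ_eq_sum_range (fun n => if Odd n then e n else 0) p
      _ = ∑ n ∈ Finset.range (2 * p), (if Odd n then e n else 0) :=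
          hext _ (fun n => by split <;> simp)
      _ = ∑ k ∈ Finset.range p, e (2 * k + 1) := odd_filter_sum' e p
  have hsum' : b ≤ (∑ k ∈ Finset.range p, e (2 * k))
      + ∑ k ∈ Finset.range p, e (2 * k + 1) := by
    rw [← split_even_odd', ← hext e (fun n => Or.inr rfl)]
    refine le_trans hsum (le_of_eq ?_)
    calc ∑ i : Fin p, d i = ∑ i : Fin p, e i.val :=
          Finset.sum_congr rfl fun i _ => by simp [he, i.isLt]
      _ = ∑ n ∈ Finset.range p, e n := Fin.sum_univ_eq_sum_range (fun n => e n) p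
  have hOE : ∑ k ∈ Finset.range p, e (2 * k + 1)
      ≤ ∑ k ∈ Finset.range p, e (2 * k) :=
    Finset.sum_le_sum fun k _ => he_anti _ _ (by omega)
  have he0 : e 0 ≤ b / 2 := by
    have := hsmall ⟨0, hp⟩; simpa [he, hp] using this
  have hEO : ∑ k ∈ Finset.range p, e (2 * k)
      ≤ e 0 + ∑ k ∈ Finset.range p, e (2 * k + 1) := by
    obtain ⟨m, rfl⟩ := Nat.exists_eq_succ_of_ne_zero hp.ne'
    rw [Finset.sum_range_succ' (fun k => e (2 * k)) m]
    have h1 : ∑ k ∈ Finset.range m, e (2 * (k + 1))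
        ≤ ∑ k ∈ Finset.range m, e (2 * k + 1) :=
      Finset.sum_le_sum fun k _ => he_anti _ _ (by omega)
    have h2 : ∑ k ∈ Finset.range m, e (2 * k + 1)
        ≤ ∑ k ∈ Finset.range (m + 1), e (2 * k + 1) := by
      rw [Finset.sum_range_succ]
      exact le_add_of_nonneg_right (he_nn _)
    simp only [Nat.mul_zero]
    linarith
  rw [hEe, hOe]
  constructor <;> linarith
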